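/- Let X and Y be n×n real symmetric positive definite matrices. Then for every t ∈ [0,1], X *_t Y = Y *_{1−t} X. -/

import Mathlib

open Matrix Filter Topology
open scoped Classical

noncomputable section

/-- Square real matrices. -/
abbrev Mat (n : ℕ) := Matrix (Fin n) (Fin n) ℝ

/-- The largest element of the real spectrum of a matrix. -/
noncomputable def lamMax {n : ℕ} (A : Mat n) : ℝ := sSup (spectrum ℝ A)

/-- The smallest element of the real spectrum of a matrix. -/
noncomputable def lamMin {n : ℕ} (A : Mat n) : ℝ := sInf (spectrum ℝ A)

/-- The positive semidefinite square root (junk value `0` if not PSD). -/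
noncomputable def sqrtM {n : ℕ} (X : Mat n) : Mat n :=
  if h : X.PosSemidef then
    (h.1.eigenvectorUnitary : Mat n) * Matrix.diagonal (fun i => Real.sqrt (h.1.eigenvalues i)) *
      (star (h.1.eigenvectorUnitary : Mat n))
  else 0

/-- `X^{-1/2}` for a positive definite matrix. -/
noncomputable def invSqrt {n : ℕ} (X : Mat n) : Mat n := (sqrtM X)⁻¹

/-- `λ_max(X^{-1/2} Y X^{-1/2})`, the largest generalized eigenvalue of the pair `(Y, X)`. -/
noncomputable def gmax {n : ℕ} (X Y : Mat n) : ℝ := lamMax (invSqrt X * Y * invSqrt X)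

/-- `λ_min(X^{-1/2} Y X^{-1/2})`, the smallest generalized eigenvalue of the pair `(Y, X)`. -/
noncomputable def gmin {n : ℕ} (X Y : Mat n) : ℝ := lamMin (invSqrt X * Y * invSqrt X)

/-- The Thompson geodesic `X *_t Y`. -/
noncomputable def thompson {n : ℕ} (X Y : Mat n) (t : ℝ) : Mat n :=
  if gmin X Y = gmax X Y then (gmin X Y) ^ t • X
  else ((gmax X Y ^ t - gmin X Y ^ t) / (gmax X Y - gmin X Y)) • Y +
    ((gmax X Y * gmin X Y ^ t - gmin X Y * gmax X Y ^ t) / (gmax X Y - gmin X Y)) • X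

/-- The Thompson part metric on positive definite matrices. -/
noncomputable def dT {n : ℕ} (X Y : Mat n) : ℝ :=
  max (Real.log (gmax X Y)) (Real.log (gmax Y X))

/-- Hilbert's projective metric on positive definite matrices. -/
noncomputable def dH {n : ℕ} (X Y : Mat n) : ℝ :=
  Real.log (gmax X Y / gmin X Y)

/-- The coefficient `m(X,Y) = dφ/dt(0)` of the Thompson geodesic. -/
noncomputable def mCoef {n : ℕ} (X Y : Mat n) : ℝ :=
  if gmax X Y = gmin X Y then 1 / gmin X Y
  else (Real.log (gmax X Y) - Real.log (gmin X Y)) / (gmax X Y - gmin X Y)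

/-- The coefficient `o(X,Y) = dψ/dt(0)` of the Thompson geodesic. -/
noncomputable def oCoef {n : ℕ} (X Y : Mat n) : ℝ :=
  if gmax X Y = gmin X Y then Real.log (gmin X Y) - 1
  else (gmax X Y * Real.log (gmin X Y) - gmin X Y * Real.log (gmax X Y)) /
    (gmax X Y - gmin X Y)

/-- The mean equation `∑ⱼ m(X*,Yⱼ)·Yⱼ + (∑ⱼ o(X*,Yⱼ))·X* = 0`. -/
def MeanEq {n k : ℕ} (Y : Fin k → Mat n) (Xs : Mat n) : Prop :=
  ∑ j, mCoef Xs (Y j) • Y j + (∑ j, oCoef Xs (Y j)) • Xs = 0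

/-- The Frobenius norm of a matrix. -/
noncomputable def frob {n : ℕ} (A : Mat n) : ℝ :=
  Real.sqrt (∑ i, ∑ j, (A i j) ^ 2)

/-- The inductive sequence of Algorithm 4.1: `indSeq hk Y X₁ i = X_{i+1}`, so that
`indSeq hk Y X₁ 0 = X₁` and `X_{i+1} = X_i *_{1/(i+1)} Y_j` with `j ≡ i (mod k)`,
`1 ≤ j ≤ k`. -/
noncomputable def indSeq {n k : ℕ} (hk : 0 < k) (Y : Fin k → Mat n) (X₁ : Mat n) :
    ℕ → Mat n
  | 0 => X₁
  | (i + 1) => thompson (indSeq hk Y X₁ i) (Y ⟨i % k, Nat.mod_lt i hk⟩)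
      (1 / ((i : ℝ) + 2))

/-- The map `T_p(X) = (⋯((X *_{1/(pk+2)} Y₁) *_{1/(pk+3)} Y₂)⋯) *_{1/((p+1)k+1)} Y_k`. -/
noncomputable def Tmap {n k : ℕ} (Y : Fin k → Mat n) (p : ℕ) (X : Mat n) : Mat n :=
  (List.finRange k).foldl
    (fun Z j => thompson Z (Y j) (1 / ((p : ℝ) * (k : ℝ) + ((j : ℕ) : ℝ) + 2))) X

/-- The spectral `t`-th power of a symmetric matrix (junk value `0` otherwise). -/
noncomputable def spdPow {n : ℕ} (A : Mat n) (t : ℝ) : Mat n :=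
  if h : A.IsHermitian then
    (h.eigenvectorUnitary : Mat n) * Matrix.diagonal (fun i => h.eigenvalues i ^ t) *
      (star (h.eigenvectorUnitary : Mat n))
  else 0

/-- The affine-invariant Riemannian geodesic `X #_t Y = X^{1/2} (X^{-1/2} Y X^{-1/2})^t X^{1/2}`. -/
noncomputable def riemann {n : ℕ} (X Y : Mat n) (t : ℝ) : Mat n :=
  sqrtM X * spdPow (invSqrt X * Y * invSqrt X) t * sqrtM X

-- aux lemmas
lemma posDef_of_posSemidef_isUnit {n : ℕ} {A : Mat n} (h : A.PosSemidef) (hu : IsUnit A) :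
    A.PosDef := by
  exact h.posDef_iff_isUnit.mpr hu

lemma sqrtM_posSemidef {n : ℕ} {X : Mat n} (hX : X.PosDef) : (sqrtM X).PosSemidef := by
  rw [sqrtM, dif_pos hX.posSemidef]
  have hd : (Matrix.diagonal (fun i => Real.sqrt (hX.posSemidef.1.eigenvalues i))).PosSemidef :=
    Matrix.posSemidef_diagonal_iff.mpr fun i => Real.sqrt_nonneg _
  exact hd.mul_mul_conjTranspose_same _

lemma sqrtM_mul_self {n : ℕ} {X : Mat n} (hX : X.PosDef) : sqrtM X * sqrtM X = X := by
  rw [sqrtM, dif_pos hX.posSemidef]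
  set U : Mat n := (hX.posSemidef.1.eigenvectorUnitary : Mat n) with hU_def
  have hU : star U * U = 1 := Unitary.star_mul_self_of_mem (hX.posSemidef.1.eigenvectorUnitary).2
  conv_rhs => rw [hX.posSemidef.1.spectral_theorem, Unitary.conjStarAlgAut_apply]
  calc U * diagonal (fun i => √(hX.posSemidef.1.eigenvalues i)) * star U *
        (U * diagonal (fun i => √(hX.posSemidef.1.eigenvalues i)) * star U)
      = U * (diagonal (fun i => √(hX.posSemidef.1.eigenvalues i)) * (star U * U) *
        diagonal (fun i => √(hX.posSemidef.1.eigenvalues i))) * star U := by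
        simp only [Matrix.mul_assoc]
    _ = U * diagonal (RCLike.ofReal ∘ hX.posSemidef.1.eigenvalues) * star U := by
      rw [hU, Matrix.mul_one, diagonal_mul_diagonal]
      congr 2; ext i j
      simp only [diagonal_apply]
      split_ifs with hij
      · exact Real.mul_self_sqrt (hX.posSemidef.eigenvalues_nonneg i)
      · rfl

lemma sqrtM_posDef {n : ℕ} {X : Mat n} (hX : X.PosDef) : (sqrtM X).PosDef := by
  refine posDef_of_posSemidef_isUnit (sqrtM_posSemidef hX) ?_
  rw [Matrix.isUnit_iff_isUnit_det]
  have hdet : det (sqrtM X) * det (sqrtM X) = det X := by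
    rw [← det_mul, sqrtM_mul_self hX]
  have : det X ≠ 0 := hX.det_pos.ne'
  exact (IsUnit.mul_iff.mp (by rw [hdet]; exact this.isUnit)).1

lemma conj_posDef {n : ℕ} {X Y : Mat n} (hX : X.PosDef) (hY : Y.PosDef) :
    (invSqrt X * Y * invSqrt X).PosDef := by
  have hC : (invSqrt X).PosDef := (sqrtM_posDef hX).inv
  have hCh : (invSqrt X).IsHermitian := hC.isHermitian
  have h1 : (invSqrt X * Y * (invSqrt X)ᴴ).PosSemidef :=
    hY.posSemidef.mul_mul_conjTranspose_same (invSqrt X)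
  rw [hCh.eq] at h1
  exact posDef_of_posSemidef_isUnit h1 ((hC.isUnit.mul hY.isUnit).mul hC.isUnit)

lemma sSup_inv_set {s : Set ℝ} (hf : s.Finite) (hne : s.Nonempty)
    (hpos : ∀ x ∈ s, 0 < x) : sSup s⁻¹ = (sInf s)⁻¹ := by
  have h1 : s⁻¹ = Inv.inv '' s := (Set.image_inv_eq_inv).symm
  have hf' : s⁻¹.Finite := h1 ▸ hf.image _
  have hne' : s⁻¹.Nonempty := h1 ▸ hne.image _
  have hminmem := hne.csInf_mem hf
  refine le_antisymm ?_ ?_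
  · have hmem := hne'.csSup_mem hf'
    rw [Set.mem_inv] at hmem
    have h2 : sInf s ≤ (sSup s⁻¹)⁻¹ := csInf_le hf.bddBelow hmem
    have hp1 : 0 < (sSup s⁻¹)⁻¹ := hpos _ hmem
    have hp2 : 0 < sInf s := hpos _ hminmem
    calc sSup s⁻¹ = ((sSup s⁻¹)⁻¹)⁻¹ := (inv_inv _).symm
    _ ≤ (sInf s)⁻¹ := by gcongr
  · refine le_csSup hf'.bddAbove ?_
    rw [Set.mem_inv, inv_inv]; exact hminmem

lemma sInf_inv_set {s : Set ℝ} (hf : s.Finite) (hne : s.Nonempty)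
    (hpos : ∀ x ∈ s, 0 < x) : sInf s⁻¹ = (sSup s)⁻¹ := by
  have h1 : s⁻¹ = Inv.inv '' s := (Set.image_inv_eq_inv).symm
  have hf' : s⁻¹.Finite := h1 ▸ hf.image _
  have hne' : s⁻¹.Nonempty := h1 ▸ hne.image _
  have hmaxmem := hne.csSup_mem hf
  have hp : 0 < sSup s := hpos _ hmaxmem
  refine le_antisymm ?_ ?_
  · refine csInf_le hf'.bddBelow ?_
    rw [Set.mem_inv, inv_inv]; exact hmaxmem
  · have hmem := hne'.csInf_mem hf'
    rw [Set.mem_inv] at hmem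
    have h2 : (sInf s⁻¹)⁻¹ ≤ sSup s := le_csSup hf.bddAbove hmem
    have hp1 : 0 < (sInf s⁻¹)⁻¹ := hpos _ hmem
    have hp2 : 0 < sInf s⁻¹ := inv_pos.mp hp1
    calc (sSup s)⁻¹ ≤ ((sInf s⁻¹)⁻¹)⁻¹ := by gcongr
    _ = sInf s⁻¹ := inv_inv _

-- spectrum facts for posdef matrices
lemma spec_pos {n : ℕ} {M : Mat n} (hM : M.PosDef) : ∀ x ∈ spectrum ℝ M, 0 < x := by
  intro x hx
  rw [Matrix.IsHermitian.spectrum_real_eq_range_eigenvalues hM.isHermitian] at hx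
  obtain ⟨i, rfl⟩ := hx
  exact hM.eigenvalues_pos i

lemma spec_nonempty {n : ℕ} (hn : 0 < n) {M : Mat n} (hM : M.IsHermitian) :
    (spectrum ℝ M).Nonempty := by
  rw [Matrix.IsHermitian.spectrum_real_eq_range_eigenvalues hM]
  haveI : Nonempty (Fin n) := ⟨⟨0, hn⟩⟩
  exact Set.range_nonempty _

lemma lamMin_mem {n : ℕ} (hn : 0 < n) {M : Mat n} (hM : M.IsHermitian) :
    lamMin M ∈ spectrum ℝ M :=
  (spec_nonempty hn hM).csInf_mem (Matrix.finite_real_spectrum (A := M))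

lemma lamMax_mem {n : ℕ} (hn : 0 < n) {M : Mat n} (hM : M.IsHermitian) :
    lamMax M ∈ spectrum ℝ M :=
  (spec_nonempty hn hM).csSup_mem (Matrix.finite_real_spectrum (A := M))

lemma lamMin_le {n : ℕ} {M : Mat n} {x : ℝ} (hx : x ∈ spectrum ℝ M) : lamMin M ≤ x :=
  csInf_le (Matrix.finite_real_spectrum (A := M)).bddBelow hx

lemma le_lamMax {n : ℕ} {M : Mat n} {x : ℝ} (hx : x ∈ spectrum ℝ M) : x ≤ lamMax M :=
  le_csSup (Matrix.finite_real_spectrum (A := M)).bddAbove hx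

-- the key spectrum inversion
lemma spec_inv {n : ℕ} {X Y : Mat n} (hX : X.PosDef) (hY : Y.PosDef) :
    spectrum ℝ (invSqrt Y * X * invSqrt Y) = (spectrum ℝ (invSqrt X * Y * invSqrt X))⁻¹ := by
  have hsd := sqrtM_posDef hX
  have htd := sqrtM_posDef hY
  have hA := conj_posDef hX hY
  have hB := conj_posDef hY hX
  set us := hsd.isUnit.unit with hus_def
  set ut := htd.isUnit.unit with hut_def
  have hus : ((us⁻¹ : (Mat n)ˣ) : Mat n) = invSqrt X := by
    rw [Matrix.coe_units_inv, IsUnit.unit_spec]; rfl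
  have hut : ((ut⁻¹ : (Mat n)ˣ) : Mat n) = invSqrt Y := by
    rw [Matrix.coe_units_inv, IsUnit.unit_spec]; rfl
  set uA := hA.isUnit.unit with huA_def
  set uB := hB.isUnit.unit with huB_def
  have hAeq : uA = us⁻¹ * (ut * ut) * us⁻¹ := by
    apply Units.ext
    rw [Units.val_mul, Units.val_mul, Units.val_mul, hus, IsUnit.unit_spec,
      IsUnit.unit_spec, sqrtM_mul_self hY]
  have hBeq : uB = ut⁻¹ * (us * us) * ut⁻¹ := by
    apply Units.ext
    rw [Units.val_mul, Units.val_mul, Units.val_mul, hut, IsUnit.unit_spec,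
      IsUnit.unit_spec, sqrtM_mul_self hX]
  have hconj : uB = (ut⁻¹ * us) * uA⁻¹ * (ut⁻¹ * us)⁻¹ := by
    rw [hAeq, hBeq]
    group
  have h1 : spectrum ℝ ((uB : Mat n)) = (spectrum ℝ ((uA : Mat n)))⁻¹ := by
    rw [hconj]
    rw [Units.val_mul, Units.val_mul]
    rw [spectrum.units_conjugate]
    exact (spectrum.map_inv uA).symm
  rwa [IsUnit.unit_spec, IsUnit.unit_spec] at h1

lemma gmax_symm {n : ℕ} (hn : 0 < n) {X Y : Mat n} (hX : X.PosDef) (hY : Y.PosDef) :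
    gmax Y X = (gmin X Y)⁻¹ := by
  have hAm := conj_posDef hX hY
  rw [gmax, gmin, lamMax, lamMin, spec_inv hX hY,
    sSup_inv_set (Matrix.finite_real_spectrum (A := _)) (spec_nonempty hn hAm.isHermitian)
      (spec_pos hAm)]

lemma gmin_symm {n : ℕ} (hn : 0 < n) {X Y : Mat n} (hX : X.PosDef) (hY : Y.PosDef) :
    gmin Y X = (gmax X Y)⁻¹ := by
  have hAm := conj_posDef hX hY
  rw [gmin, gmax, lamMin, lamMax, spec_inv hX hY,
    sInf_inv_set (Matrix.finite_real_spectrum (A := _)) (spec_nonempty hn hAm.isHermitian)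
      (spec_pos hAm)]


/-- symmetry of the Thompson geodesic. -/
theorem thompson_symm {n : ℕ} (X Y : Mat n) (hX : X.PosDef) (hY : Y.PosDef)
    (t : ℝ) (ht : t ∈ Set.Icc (0 : ℝ) 1) :
    thompson X Y t = thompson Y X (1 - t) := by
  rcases Nat.eq_zero_or_pos n with hn | hn
  · subst hn; apply Matrix.ext; exact fun i => i.elim0
  have hA := conj_posDef hX hY
  have hAh := hA.isHermitian
  set α := gmin X Y with hα_def
  set β := gmax X Y with hβ_def
  have hαmem : α ∈ spectrum ℝ (invSqrt X * Y * invSqrt X) := lamMin_mem hn hAh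
  have hβmem : β ∈ spectrum ℝ (invSqrt X * Y * invSqrt X) := lamMax_mem hn hAh
  have hαpos : 0 < α := spec_pos hA _ hαmem
  have hβpos : 0 < β := spec_pos hA _ hβmem
  have hga : gmax Y X = α⁻¹ := gmax_symm hn hX hY
  have hgi : gmin Y X = β⁻¹ := gmin_symm hn hX hY
  by_cases h : α = β
  · -- scalar case: Y = α • X
    have heig : ∀ i, hAh.eigenvalues i = α := by
      intro i
      have hm := hAh.eigenvalues_mem_spectrum_real i
      exact le_antisymm (h ▸ le_lamMax hm) (lamMin_le hm)
    have hA1 : invSqrt X * Y * invSqrt X = α • (1 : Mat n) := by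
      conv_lhs => rw [hAh.spectral_theorem]
      have hd : Matrix.diagonal (RCLike.ofReal ∘ hAh.eigenvalues) = α • (1 : Mat n) := by
        ext i j
        rcases eq_or_ne i j with rfl | hij
        · simp [Matrix.diagonal_apply_eq, heig]
        · simp [Matrix.diagonal_apply_ne _ hij, Matrix.one_apply_ne hij]
      rw [hd, map_smul, map_one]
    have hss : sqrtM X * sqrtM X = X := sqrtM_mul_self hX
    have hu := (sqrtM_posDef hX).isUnit
    have h1 : sqrtM X * (sqrtM X)⁻¹ = 1 :=
      Matrix.mul_nonsing_inv _ ((Matrix.isUnit_iff_isUnit_det _).mp hu)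
    have h2 : (sqrtM X)⁻¹ * sqrtM X = 1 :=
      Matrix.nonsing_inv_mul _ ((Matrix.isUnit_iff_isUnit_det _).mp hu)
    have hc : sqrtM X * (invSqrt X * Y * invSqrt X) * sqrtM X = Y := by
      show sqrtM X * ((sqrtM X)⁻¹ * Y * (sqrtM X)⁻¹) * sqrtM X = Y
      calc sqrtM X * ((sqrtM X)⁻¹ * Y * (sqrtM X)⁻¹) * sqrtM X
          = (sqrtM X * (sqrtM X)⁻¹) * Y * ((sqrtM X)⁻¹ * sqrtM X) := by
            simp only [Matrix.mul_assoc]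
      _ = Y := by rw [h1, h2, Matrix.one_mul, Matrix.mul_one]
    have hY' : Y = α • X := by
      rw [← hc, hA1, mul_smul_comm, smul_mul_assoc, mul_one, hss]
    rw [thompson, if_pos h, thompson, if_pos (by rw [hgi, hga, h]), hgi, ← hα_def]
    rw [hY', smul_smul, ← h]
    congr 1
    rw [Real.inv_rpow hαpos.le, ← Real.rpow_neg hαpos.le, neg_sub]
    have h3 := Real.rpow_add hαpos (t - 1) 1
    rw [Real.rpow_one] at h3
    rw [← h3]
    norm_num
  · have hne2 : gmin Y X ≠ gmax Y X := by
      rw [hgi, hga]; exact fun hc => h (inv_injective hc).symm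
    rw [thompson, if_neg h, thompson, if_neg hne2, hgi, hga]
    have hβα : β - α ≠ 0 := sub_ne_zero.mpr (Ne.symm h)
    set p := α ^ t with hp_def
    set q := β ^ t with hq_def
    set a := α ^ (1 - t) with ha_def
    set b := β ^ (1 - t) with hb_def
    have hpa : p * a = α := by rw [hp_def, ha_def, ← Real.rpow_add hαpos]; norm_num
    have hqb : q * b = β := by rw [hq_def, hb_def, ← Real.rpow_add hβpos]; norm_num
    have hp0 : p ≠ 0 := (Real.rpow_pos_of_pos hαpos t).ne'
    have hq0 : q ≠ 0 := (Real.rpow_pos_of_pos hβpos t).ne'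
    have ha0 : a ≠ 0 := (Real.rpow_pos_of_pos hαpos (1 - t)).ne'
    have hb0 : b ≠ 0 := (Real.rpow_pos_of_pos hβpos (1 - t)).ne'
    have key1 : (α⁻¹ ^ (1 - t) - β⁻¹ ^ (1 - t)) / (α⁻¹ - β⁻¹)
        = (β * p - α * q) / (β - α) := by
      rw [Real.inv_rpow hαpos.le, Real.inv_rpow hβpos.le, ← ha_def, ← hb_def,
        ← hpa, ← hqb]
      have hsub : q * b - p * a ≠ 0 := by rw [hpa, hqb]; exact hβα
      have hsub2 : (p * a)⁻¹ - (q * b)⁻¹ ≠ 0 := by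
        rw [hpa, hqb]
        exact sub_ne_zero.mpr fun hc => h (inv_injective hc)
      field_simp
    have key2 : (α⁻¹ * β⁻¹ ^ (1 - t) - β⁻¹ * α⁻¹ ^ (1 - t)) / (α⁻¹ - β⁻¹)
        = (q - p) / (β - α) := by
      rw [Real.inv_rpow hαpos.le, Real.inv_rpow hβpos.le, ← ha_def, ← hb_def,
        ← hpa, ← hqb]
      have hsub : q * b - p * a ≠ 0 := by rw [hpa, hqb]; exact hβα
      have hsub2 : (p * a)⁻¹ - (q * b)⁻¹ ≠ 0 := by
        rw [hpa, hqb]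
        exact sub_ne_zero.mpr fun hc => h (inv_injective hc)
      field_simp
    rw [key1, key2]
    exact add_comm _ _
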